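/- Let n, ℓ ∈ ℕ⁺. There exists an absolute constant c and a fully connected ReLU network φ of input dimension 1, output dimension 2, width at most c·3^n, depth at most c·⌈ℓ/n⌉, and weights bounded in absolute value by 3^{cn}, such that for any binary digits θ_1, θ_2, … ∈ {0,1}, φ(Σ_{k=1}^∞ θ_k 3^{-k}) = (Σ_{j=1}^ℓ θ_j 2^{-j}, Σ_{k=1}^∞ θ_{ℓ+k} 3^{-k}). -/

import Mathlib

open Set Filter MeasureTheory ProbabilityTheory
open scoped ENNReal NNReal BigOperators

noncomputable section

namespace DeepRelu

/-! ### Fully connected ReLU networks -/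

/-- Forward pass (pre-activation of the last layer) of a fully connected ReLU network,
realized on `ℕ → ℝ` with widths recorded in `widths`. -/
def forward (widths : ℕ → ℕ) (W : ℕ → ℕ → ℕ → ℝ) (v : ℕ → ℕ → ℝ) :
    ℕ → (ℕ → ℝ) → ℕ → ℝ
  | 0, x, j => ∑ k ∈ Finset.range (widths 0), W 0 j k * x k
  | i + 1, x, j => ∑ k ∈ Finset.range (widths (i + 1)),
      W (i + 1) j k * max (forward widths W v i x k + v i k) 0

/-- `IsReLUNet D dout width depth bound f` : the function `f : ℝ^D → ℝ^dout` is realized by a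
fully connected ReLU network of depth at most `depth`, all widths at most `width`, and all
weight and bias entries bounded in absolute value by `bound`. -/
def IsReLUNet (D dout : ℕ) (width depth bound : ℝ)
    (f : (Fin D → ℝ) → Fin dout → ℝ) : Prop :=
  ∃ (L : ℕ) (widths : ℕ → ℕ) (W : ℕ → ℕ → ℕ → ℝ) (v : ℕ → ℕ → ℝ),
    (L : ℝ) ≤ depth ∧ widths 0 = D ∧ widths (L + 1) = dout ∧
    (∀ i, i ≤ L + 1 → (widths i : ℝ) ≤ width) ∧
    (∀ i j k, i ≤ L → j < widths (i + 1) → k < widths i → |W i j k| ≤ bound) ∧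
    (∀ i j, i ≤ L → j < widths (i + 1) → |v i j| ≤ bound) ∧
    ∀ (x : Fin D → ℝ) (j : Fin dout),
      f x j = forward widths W v L (fun k => if h : k < D then x ⟨k, h⟩ else 0) j + v L j

/-- The class of functions realized by fully connected ReLU networks. -/
def ReLUNetClass (D dout : ℕ) (width depth bound : ℝ) :
    Set ((Fin D → ℝ) → Fin dout → ℝ) :=
  {f | IsReLUNet D dout width depth bound f}

/-! ### Covering numbers and Minkowski dimension -/

/-- `ε`-covering number of a set `Θ` with respect to a distance function `d`. -/
def coveringNumber {α : Type*} (d : α → α → ℝ) (ε : ℝ) (Θ : Set α) : ℝ≥0∞ :=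
  sInf {n : ℝ≥0∞ | ∃ t : Finset α, (t.card : ℝ≥0∞) = n ∧ ∀ x ∈ Θ, ∃ y ∈ t, d x y ≤ ε}

/-- Uniform distance between two real-valued functions over a set `K`. -/
def unifDist {β : Type*} (K : Set β) (f g : β → ℝ) : ℝ :=
  ⨆ x : K, |f x.1 - g x.1|

/-- (Upper) Minkowski dimension with respect to the sup-norm. -/
def minkowskiDim {ι : Type*} [Fintype ι] (M : Set (ι → ℝ)) : ℝ :=
  limsup (fun ε : ℝ =>
      Real.log ((coveringNumber (fun x y => dist x y) ε M).toReal) / Real.log (1 / ε))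
    (nhdsWithin 0 (Ioi 0))

/-- `δ`-enlargement of a set in the sup-norm. -/
def enlarge {β : Type*} [PseudoEMetricSpace β] (A : Set β) (δ : ℝ) : Set β :=
  {x | EMetric.infEdist x A ≤ ENNReal.ofReal δ}

/-- The unit cube `[0,1]^D`. -/
def unitCube (D : ℕ) : Set (Fin D → ℝ) := Set.Icc 0 1

/-! ### Hölder classes -/

section Holder

variable {ι : Type*} [Fintype ι] [DecidableEq ι]

/-- Partial derivative in the `j`-th coordinate. -/
def pderiv (j : ι) (f : (ι → ℝ) → ℝ) : (ι → ℝ) → ℝ :=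
  fun x => fderiv ℝ f x (Pi.single j 1)

/-- Iterated partial derivative in the `j`-th coordinate. -/
def iterPDeriv (j : ι) : ℕ → ((ι → ℝ) → ℝ) → ((ι → ℝ) → ℝ)
  | 0 => id
  | n + 1 => fun f => pderiv j (iterPDeriv j n f)

/-- Multi-index partial derivative `∂^α f`. -/
def multiDeriv (α : ι → ℕ) (f : (ι → ℝ) → ℝ) : (ι → ℝ) → ℝ :=
  (Finset.univ : Finset ι).toList.foldr (fun j g => iterPDeriv j (α j) g) f

/-- Order `|α|` of a multi-index. -/
def mdeg (α : ι → ℕ) : ℕ := ∑ j, α j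

/-- The Hölder norm of `f` on `K`. -/
def holderNorm (s : ℝ) (K : Set (ι → ℝ)) (f : (ι → ℝ) → ℝ) : ℝ :=
  (∑ α ∈ Finset.filter (fun α => mdeg α < ⌊s⌋₊)
      (Fintype.piFinset fun _ : ι => Finset.range (⌊s⌋₊ + 1)),
    ⨆ x : K, |multiDeriv α f x.1|) +
  ∑ α ∈ Finset.filter (fun α => mdeg α = ⌊s⌋₊)
      (Fintype.piFinset fun _ : ι => Finset.range (⌊s⌋₊ + 1)),
    ⨆ p : {p : (ι → ℝ) × (ι → ℝ) // p.1 ∈ K ∧ p.2 ∈ K ∧ p.1 ≠ p.2},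
      |multiDeriv α f p.1.1 - multiDeriv α f p.1.2| / dist p.1.1 p.1.2 ^ (s - (⌊s⌋₊ : ℝ))

/-- Membership in the Hölder class `H_s(K, C)`. -/
def MemHolder (s C : ℝ) (K : Set (ι → ℝ)) (f : (ι → ℝ) → ℝ) : Prop :=
  ContDiff ℝ (⌊s⌋₊ : ℕ∞) f ∧ holderNorm s K f ≤ C

end Holder

/-! ### Compositional models -/

/-- `compUpTo Dv g i = g_{i-1} ∘ ⋯ ∘ g_0` (and the identity for `i = 0`). -/
def compUpTo (Dv : ℕ → ℕ)
    (g : (i : ℕ) → (Fin (Dv i) → ℝ) → (Fin (Dv (i + 1)) → ℝ)) :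
    (i : ℕ) → (Fin (Dv 0) → ℝ) → (Fin (Dv i) → ℝ)
  | 0 => id
  | i + 1 => fun x => g i (compUpTo Dv g i x)

/-- Assemble full layer maps from component functions acting on coordinate subsets. -/
def assemble (Dv : ℕ → ℕ) (S : (i : ℕ) → Fin (Dv (i + 1)) → Finset (Fin (Dv i)))
    (gc : (i : ℕ) → (j : Fin (Dv (i + 1))) → (↥(S i j) → ℝ) → ℝ) :
    (i : ℕ) → (Fin (Dv i) → ℝ) → (Fin (Dv (i + 1)) → ℝ) :=
  fun i x j => gc i j fun k => x k.1

/-- Accumulated sup-norm error `δ_i` between partial compositions over `M` (`δ_0 = 0`). -/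
def accErr (Dv : ℕ → ℕ)
    (h h' : (i : ℕ) → (Fin (Dv i) → ℝ) → (Fin (Dv (i + 1)) → ℝ))
    (M : Set (Fin (Dv 0) → ℝ)) : ℕ → ℝ
  | 0 => 0
  | i + 1 => ⨆ x : M, dist (compUpTo Dv h (i + 2) x.1) (compUpTo Dv h' (i + 2) x.1)

/-! ### Median smoothing -/

/-- Median of three real numbers. -/
def mid (a b c : ℝ) : ℝ := max (min a b) (min (max a b) c)

/-- Coordinatewise median smoothing `M_{g,i}` at scale `δ`. -/
def medSmooth {D : ℕ} (δ : ℝ) (g : (Fin D → ℝ) → ℝ) : ℕ → (Fin D → ℝ) → ℝ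
  | 0 => g
  | i + 1 => fun x =>
      if h : i < D then
        mid (medSmooth δ g i fun k => x k - if k = ⟨i, h⟩ then δ else 0)
            (medSmooth δ g i x)
            (medSmooth δ g i fun k => x k + if k = ⟨i, h⟩ then δ else 0)
      else medSmooth δ g i x

/-- Modulus of continuity of `f` on the unit cube. -/
def modCont {D : ℕ} (f : (Fin D → ℝ) → ℝ) (δ : ℝ) : ℝ :=
  ⨆ p : {p : (Fin D → ℝ) × (Fin D → ℝ) //
      p.1 ∈ unitCube D ∧ p.2 ∈ unitCube D ∧ dist p.1 p.2 ≤ δ},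
    |f p.1.1 - f p.1.2|

/-- Grid cube `Q_β` of side length `1/K`. -/
def Qcube {D : ℕ} (K : ℕ) (β : Fin D → ℕ) : Set (Fin D → ℝ) :=
  univ.pi fun i => Icc ((β i : ℝ) / K) (((β i : ℝ) + 1) / K)

/-- The set `Ω_{K,δ}` of points close to interior grid hyperplanes. -/
def badset (D K : ℕ) (δ : ℝ) : Set (Fin D → ℝ) :=
  ⋃ j : Fin D, {x ∈ unitCube D |
    ∃ k : ℕ, 1 ≤ k ∧ k ≤ K - 1 ∧ x j ∈ Ioo ((k : ℝ) / K - δ) ((k : ℝ) / K)}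


/-! ### Auxiliary development for Statement 15 -/

section BitDecodingAux

variable {θ : ℕ → ℕ}

noncomputable def bin (m w : ℕ) : ℝ :=
  ∑ k ∈ Finset.range m, if w / 3^k % 3 = 1 then ((2:ℝ)^(m-k))⁻¹ else 0

def pref (θ : ℕ → ℕ) (a m : ℕ) : ℕ := ∑ k ∈ Finset.range m, θ (a+k) * 3^(m-1-k)

noncomputable def T3 (θ : ℕ → ℕ) (a : ℕ) : ℝ := ∑' k, (θ (a+k) : ℝ)/3^(k+1)

noncomputable def Sb (θ : ℕ → ℕ) (a : ℕ) : ℝ := ∑ j ∈ Finset.range a, (θ j : ℝ)/2^(j+1)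

variable {θ : ℕ → ℕ}

lemma geo_summable : Summable fun k : ℕ => ((1:ℝ)/3)^(k+1) := by
  have h := (summable_geometric_of_lt_one (by norm_num : (0:ℝ) ≤ 1/3) (by norm_num)).mul_left (1/3)
  refine h.congr fun k => ?_
  ring

lemma T3_bound_term (hθ : ∀ k, θ k ≤ 1) (a k : ℕ) :
    (θ (a+k) : ℝ)/3^(k+1) ≤ ((1:ℝ)/3)^(k+1) := by
  have h1 : (θ (a+k) : ℝ) ≤ 1 := by exact_mod_cast hθ (a+k)
  rw [div_pow, one_pow]
  gcongr

lemma summable_T3 (hθ : ∀ k, θ k ≤ 1) (a : ℕ) :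
    Summable fun k => (θ (a+k) : ℝ)/3^(k+1) :=
  Summable.of_nonneg_of_le (fun k => by positivity) (T3_bound_term hθ a) geo_summable

lemma T3_nonneg (a : ℕ) : 0 ≤ T3 θ a :=
  tsum_nonneg fun k => by positivity

lemma T3_le_half (hθ : ∀ k, θ k ≤ 1) (a : ℕ) : T3 θ a ≤ 1/2 := by
  have := Summable.tsum_le_tsum (T3_bound_term hθ a) (summable_T3 hθ a) geo_summable
  refine this.trans ?_
  have h2 : ∑' k : ℕ, (1/3:ℝ)^(k+1) = (1/3) * ∑' k : ℕ, (1/3:ℝ)^k := by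
    rw [← tsum_mul_left]
    exact tsum_congr fun k => by ring
  rw [h2, tsum_geometric_of_lt_one (by norm_num) (by norm_num)]
  norm_num

lemma Sb_nonneg (a : ℕ) : 0 ≤ Sb θ a :=
  Finset.sum_nonneg fun j _ => by positivity

lemma T3_split (hθ : ∀ k, θ k ≤ 1) (a m : ℕ) :
    (3:ℝ)^m * T3 θ a = (pref θ a m : ℝ) + T3 θ (a+m) := by
  have hs := summable_T3 hθ a
  have hsplit := (Summable.sum_add_tsum_nat_add m hs).symm
  unfold T3
  rw [hsplit, mul_add]
  congr 1
  · rw [Finset.mul_sum, pref, Nat.cast_sum]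
    refine Finset.sum_congr rfl fun k hk => ?_
    have hk' : k < m := Finset.mem_range.mp hk
    push_cast
    rw [mul_div_assoc', div_eq_iff (ne_of_gt (by positivity : (0:ℝ) < 3^(k+1))), mul_assoc, ← pow_add,
      show m - 1 - k + (k+1) = m from by omega, mul_comm]
  · rw [← tsum_mul_left]
    refine tsum_congr fun k => ?_
    have h1 : a + (k + m) = a + m + k := by omega
    rw [h1, mul_div_assoc', div_eq_div_iff (by positivity) (by positivity), mul_comm ((3:ℝ)^m), mul_assoc,
      ← pow_add, show m + (k+1) = k+m+1 from by omega]


lemma sum_range_split (f : ℕ → ℕ) {t m : ℕ} (ht : t ≤ m) :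
    ∑ j ∈ Finset.range m, f j
      = (∑ j ∈ Finset.range t, f j) + ∑ j ∈ Finset.range (m-t), f (t+j) := by
  rw [show m = t + (m-t) from by omega, Finset.sum_range_add]
  simp [show t + (m-t) - t = m - t from by omega]

lemma pref_succ (a m : ℕ) : pref θ a (m+1) = 3 * pref θ a m + θ (a+m) := by
  unfold pref
  rw [Finset.sum_range_succ, show m + 1 - 1 - m = 0 from by omega, pow_zero, mul_one,
    Finset.mul_sum]
  congr 1
  refine Finset.sum_congr rfl fun x hx => ?_
  have hx' : x < m := Finset.mem_range.mp hx
  rw [show m + 1 - 1 - x = (m - 1 - x) + 1 from by omega, pow_succ]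
  ring

lemma pref_lt (hθ : ∀ k, θ k ≤ 1) (a m : ℕ) : 2 * pref θ a m + 1 ≤ 3^m := by
  induction m with
  | zero => simp [pref]
  | succ m ih =>
      rw [pref_succ]
      have := hθ (a+m)
      have h3 : (3:ℕ)^(m+1) = 3 * 3^m := by ring
      omega

lemma digit_lt {e : ℕ → ℕ} (he : ∀ j, e j ≤ 2) (t : ℕ) :
    ∑ j ∈ Finset.range t, e j * 3^j < 3^t := by
  induction t with
  | zero => simp
  | succ t ih =>
      rw [Finset.sum_range_succ]
      have := he t
      have h3 : (3:ℕ)^(t+1) = 3 * 3^t := by ring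
      nlinarith [pow_pos (by norm_num : 0 < 3) t]

lemma digit_extract {e : ℕ → ℕ} (he : ∀ j, e j ≤ 2) {m t : ℕ} (ht : t < m) :
    (∑ j ∈ Finset.range m, e j * 3^j) / 3^t % 3 = e t := by
  rw [sum_range_split (fun j => e j * 3^j) (le_of_lt ht)]
  have h1 : ∀ j, e (t+j) * 3^(t+j) = 3^t * (e (t+j) * 3^j) := by
    intro j; rw [pow_add]; ring
  simp only [h1]
  rw [← Finset.mul_sum]
  set b := ∑ j ∈ Finset.range (m-t), e (t+j) * 3^j with hb
  have ha := digit_lt he t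
  rw [Nat.add_mul_div_left _ _ (by positivity : 0 < 3^t), Nat.div_eq_of_lt ha, Nat.zero_add]
  -- b % 3 = e t
  have hmt : m - t = (m - t - 1) + 1 := by omega
  rw [hb, hmt, Finset.sum_range_succ']
  simp only [Nat.add_zero, pow_zero, mul_one]
  have h2 : ∀ i, e (t+(i+1)) * 3^(i+1) = 3 * (e (t+(i+1)) * 3^i) := by
    intro i; rw [pow_succ]; ring
  simp only [h2]
  rw [← Finset.mul_sum, Nat.mul_add_mod]
  have := he t
  exact Nat.mod_eq_of_lt (by omega)


lemma bin_zero (m : ℕ) : bin m 0 = 0 := by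
  unfold bin
  refine Finset.sum_eq_zero fun k _ => ?_
  simp

lemma bin_nonneg (m w : ℕ) : 0 ≤ bin m w :=
  Finset.sum_nonneg fun k _ => by positivity

lemma bin_le_one (m w : ℕ) : bin m w ≤ 1 := by
  have h1 : bin m w ≤ ∑ k ∈ Finset.range m, ((2:ℝ)^(m-k))⁻¹ := by
    refine Finset.sum_le_sum fun k _ => ?_
    split_ifs
    · exact le_refl _
    · positivity
  refine h1.trans ?_
  have h2 : ∑ k ∈ Finset.range m, ((2:ℝ)^(m-k))⁻¹ = ∑ j ∈ Finset.range m, ((1:ℝ)/2)^(j+1) := by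
    rw [← Finset.sum_range_reflect]
    refine Finset.sum_congr rfl fun k hk => ?_
    have hk' : k < m := Finset.mem_range.mp hk
    rw [show m - (m - 1 - k) = k + 1 from by omega, one_div, inv_pow]
  rw [h2]
  have h3 : ∑ j ∈ Finset.range m, ((1:ℝ)/2)^(j+1) = (1/2) * ∑ j ∈ Finset.range m, ((1:ℝ)/2)^j := by
    rw [Finset.mul_sum]
    exact Finset.sum_congr rfl fun j _ => by ring
  rw [h3]
  have := sum_geometric_two_le m
  linarith

-- pref as a little-endian digit sum
lemma pref_eq (a m : ℕ) :
    pref θ a m = ∑ j ∈ Finset.range m, θ (a + (m-1-j)) * 3^j := by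
  unfold pref
  rw [← Finset.sum_range_reflect]
  refine Finset.sum_congr rfl fun k hk => ?_
  have hk' : k < m := Finset.mem_range.mp hk
  rw [show m - 1 - (m - 1 - k) = k from by omega]

lemma bin_pref (hθ : ∀ k, θ k ≤ 1) (a m : ℕ) :
    bin m (pref θ a m) = ∑ j ∈ Finset.range m, (θ (a+j) : ℝ)/2^(j+1) := by
  unfold bin
  have hdig : ∀ k < m, pref θ a m / 3^k % 3 = θ (a + (m-1-k)) := by
    intro k hk
    rw [pref_eq]
    exact digit_extract (fun j => le_trans (hθ _) one_le_two) hk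
  have h1 : ∀ k ∈ Finset.range m,
      (if pref θ a m / 3^k % 3 = 1 then ((2:ℝ)^(m-k))⁻¹ else 0)
        = (θ (a + (m-1-k)) : ℝ) * ((2:ℝ)^(m-k))⁻¹ := by
    intro k hk
    have hk' : k < m := Finset.mem_range.mp hk
    rw [hdig k hk']
    rcases Nat.le_one_iff_eq_zero_or_eq_one.mp (hθ (a + (m-1-k))) with h | h <;> simp [h]
  rw [Finset.sum_congr rfl h1, ← Finset.sum_range_reflect]
  refine Finset.sum_congr rfl fun k hk => ?_
  have hk' : k < m := Finset.mem_range.mp hk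
  rw [show m - 1 - (m - 1 - k) = k from by omega, show m - (m-1-k) = k+1 from by omega]
  rw [div_eq_mul_inv]

lemma telescope (g : ℕ → ℝ) {W M : ℕ} (h : W ≤ M) :
    ∑ t ∈ Finset.range M, (if t+1 ≤ W then g (t+1) - g t else 0) = g W - g 0 := by
  rw [← Finset.sum_subset (Finset.range_subset_range.mpr h) (fun t _ ht => ?_)]
  · rw [← Finset.sum_range_sub g W]
    refine Finset.sum_congr rfl fun t ht => ?_
    have := Finset.mem_range.mp ht
    rw [if_pos (by omega)]
  · rw [if_neg (by simp at ht ⊢; omega)]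

lemma bump {y ρ : ℝ} {W : ℕ} (t : ℕ) (hy : y = (W:ℝ) + ρ) (h0 : 0 ≤ ρ) (h1 : ρ ≤ 1/2) :
    max (4*y - (4*(t:ℝ)+2)) 0 - max (4*y - (4*(t:ℝ)+3)) 0
      = if t+1 ≤ W then 1 else 0 := by
  rcases le_or_gt (t+1) W with h | h
  · have hW : (t:ℝ) + 1 ≤ (W:ℝ) := by exact_mod_cast h
    rw [if_pos h, max_eq_left (by nlinarith), max_eq_left (by nlinarith)]
    ring
  · have hW : (W:ℝ) ≤ (t:ℝ) := by exact_mod_cast Nat.lt_succ_iff.mp h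
    rw [if_neg (by omega), max_eq_right (by nlinarith), max_eq_right (by nlinarith)]
    ring

lemma sum_pair (M : ℕ) (f : ℕ → ℝ) :
    ∑ k ∈ Finset.range (2+2*M), f k
      = f 0 + f 1 + ∑ t ∈ Finset.range M, (f (2+2*t) + f (3+2*t)) := by
  induction M with
  | zero => simp [Finset.sum_range_succ]
  | succ M ih =>
      rw [show 2+2*(M+1) = (2+2*M) + 1 + 1 from by omega, Finset.sum_range_succ,
        Finset.sum_range_succ, ih, Finset.sum_range_succ]
      ring_nf


/-! ### The network -/

noncomputable def Bn (n ℓ : ℕ) : ℕ := ⌈(ℓ:ℝ)/(n:ℝ)⌉₊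

def off (n ℓ b : ℕ) : ℕ := min ℓ (n*b)

def blk (n ℓ b : ℕ) : ℕ := off n ℓ (b+1) - off n ℓ b

noncomputable def wd (n ℓ : ℕ) : ℕ → ℕ := fun i =>
  if i = 0 then 1 else if i ≤ Bn n ℓ then 2 + 2*3^(blk n ℓ (i-1)) else 2

noncomputable def rowS (a m : ℕ) : ℕ → ℝ := fun k =>
  if k = 0 then 1 else if k = 1 then 0 else
  (if k % 2 = 0 then 1 else -1) * (((2:ℝ)^a)⁻¹ * (bin m ((k-2)/2 + 1) - bin m ((k-2)/2)))

noncomputable def rowR (m : ℕ) : ℕ → ℝ := fun k =>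
  if k = 0 then 0 else if k = 1 then 3^m else if k % 2 = 0 then -1 else 1

noncomputable def Wm (n ℓ : ℕ) : ℕ → ℕ → ℕ → ℝ := fun i j k =>
  if i = 0 then (if j = 0 then 0 else if j = 1 then 1 else 4*3^(blk n ℓ 0))
  else if j = 0 then rowS (off n ℓ (i-1)) (blk n ℓ (i-1)) k
  else if j = 1 then rowR (blk n ℓ (i-1)) k
  else 4*3^(blk n ℓ i) * rowR (blk n ℓ (i-1)) k

noncomputable def vb (n ℓ : ℕ) : ℕ → ℕ → ℝ := fun i j =>
  if Bn n ℓ ≤ i then 0 else if j ≤ 1 then 0 else -(((2*j - 2 - j % 2 : ℕ)) : ℝ)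

section facts
variable {n ℓ : ℕ} (hn : 0 < n) (hl : 0 < ℓ)

lemma off_zero : off n ℓ 0 = 0 := by simp [off]

lemma off_succ (b : ℕ) : off n ℓ (b+1) = off n ℓ b + blk n ℓ b := by
  unfold blk off
  have e : n*(b+1) = n*b + n := by ring
  omega

include hn hl in
lemma Bn_pos : 0 < Bn n ℓ := by
  rw [Bn, Nat.ceil_pos]
  positivity

include hn in
lemma lt_of_lt_Bn {b : ℕ} (hb : b < Bn n ℓ) : n*b < ℓ := by
  rw [Bn, Nat.lt_ceil] at hb
  have h2 : (b:ℝ) * n < ℓ := by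
    rw [lt_div_iff₀ (by positivity : (0:ℝ) < n)] at hb
    exact hb
  exact_mod_cast (by rw [mul_comm] at h2; exact_mod_cast h2 : ((n*b : ℕ) : ℝ) < (ℓ:ℝ))

include hn in
lemma off_Bn : off n ℓ (Bn n ℓ) = ℓ := by
  have h1 : (ℓ:ℝ)/(n:ℝ) ≤ (Bn n ℓ : ℝ) := Nat.le_ceil _
  rw [div_le_iff₀ (by positivity : (0:ℝ) < n)] at h1
  have h2 : (ℓ:ℝ) ≤ ((n * Bn n ℓ : ℕ) : ℝ) := by push_cast; linarith
  have h3 : ℓ ≤ n * Bn n ℓ := by exact_mod_cast h2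
  simp [off, h3]

lemma blk_le (b : ℕ) : blk n ℓ b ≤ n := by
  unfold blk off
  have e : n*(b+1) = n*b + n := by ring
  omega

include hn in
lemma blk_pos {b : ℕ} (hb : b < Bn n ℓ) : 0 < blk n ℓ b := by
  have h1 := lt_of_lt_Bn hn hb
  unfold blk off
  have e : n*(b+1) = n*b + n := by ring
  omega

include hn in
lemma off_le (b : ℕ) : off n ℓ b ≤ ℓ := Nat.min_le_left _ _

end facts

lemma Wm_zero (n ℓ j k : ℕ) :
    Wm n ℓ 0 j k = if j = 0 then 0 else if j = 1 then 1 else 4*3^(blk n ℓ 0) := by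
  simp [Wm]

lemma Wm_succ (n ℓ b j k : ℕ) :
    Wm n ℓ (b+1) j k = if j = 0 then rowS (off n ℓ b) (blk n ℓ b) k
      else if j = 1 then rowR (blk n ℓ b) k
      else 4*3^(blk n ℓ (b+1)) * rowR (blk n ℓ b) k := by
  simp [Wm]

lemma vb_eq {n ℓ b : ℕ} (hb : b < Bn n ℓ) (j : ℕ) :
    vb n ℓ b j = if j ≤ 1 then 0 else -(((2*j - 2 - j % 2 : ℕ)) : ℝ) := by
  rw [vb, if_neg (Nat.not_le.mpr hb)]

/-! ### The invariant -/

lemma invariant {θ : ℕ → ℕ} (n ℓ : ℕ) (hn : 0 < n) (hl : 0 < ℓ) (hθ : ∀ k, θ k ≤ 1)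
    (x : ℕ → ℝ) (hx : x 0 = T3 θ 0) :
    ∀ b, b ≤ Bn n ℓ →
      forward (wd n ℓ) (Wm n ℓ) (vb n ℓ) b x 0 = Sb θ (off n ℓ b)
      ∧ forward (wd n ℓ) (Wm n ℓ) (vb n ℓ) b x 1 = T3 θ (off n ℓ b)
      ∧ ∀ j, 2 ≤ j → forward (wd n ℓ) (Wm n ℓ) (vb n ℓ) b x j
          = 4*3^(blk n ℓ b) * T3 θ (off n ℓ b) := by
  intro b
  induction b with
  | zero =>
      intro _
      have h0 : ∀ j, forward (wd n ℓ) (Wm n ℓ) (vb n ℓ) 0 x j = Wm n ℓ 0 j 0 * x 0 := by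
        intro j
        show (∑ k ∈ Finset.range (wd n ℓ 0), Wm n ℓ 0 j k * x k) = _
        rw [show wd n ℓ 0 = 1 from by simp [wd], Finset.sum_range_one]
      refine ⟨?_, ?_, ?_⟩
      · rw [h0, show Wm n ℓ 0 0 0 = 0 from by simp [Wm], zero_mul, off_zero]
        simp [Sb]
      · rw [h0, Wm_zero, if_neg (by omega), if_pos rfl, one_mul, off_zero, hx]
      · intro j hj
        rw [h0, Wm_zero, if_neg (by omega), if_neg (by omega), off_zero, hx]
  | succ b ih =>
      intro hb1
      have hbB : b < Bn n ℓ := hb1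
      obtain ⟨ih0, ih1, ih2⟩ := ih (le_of_lt hbB)
      set m := blk n ℓ b with hm
      set a := off n ℓ b with ha
      set W := pref θ a m with hW
      set M := 3^m with hM
      set σ : ℕ → ℝ := fun k => max (forward (wd n ℓ) (Wm n ℓ) (vb n ℓ) b x k + vb n ℓ b k) 0
        with hσ
      have hwd : wd n ℓ (b+1) = 2 + 2*M := by
        rw [wd]; simp only [Nat.add_sub_cancel]
        rw [if_neg (by omega), if_pos hb1]
      have hfwd : ∀ j, forward (wd n ℓ) (Wm n ℓ) (vb n ℓ) (b+1) x j
          = ∑ k ∈ Finset.range (2+2*M), Wm n ℓ (b+1) j k * σ k := by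
        intro j
        show (∑ k ∈ Finset.range (wd n ℓ (b+1)), _) = _
        rw [hwd]
      -- σ values
      have hvb0 : ∀ k, k ≤ 1 → vb n ℓ b k = 0 := by
        intro k hk
        rw [vb_eq hbB, if_pos hk]
      have hσ0 : σ 0 = Sb θ a := by
        rw [hσ]; simp only
        rw [ih0, hvb0 0 (by omega), add_zero, max_eq_left (Sb_nonneg a)]
      have hσ1 : σ 1 = T3 θ a := by
        rw [hσ]; simp only
        rw [ih1, hvb0 1 (by omega), add_zero, max_eq_left (T3_nonneg a)]
      have hy : (3:ℝ)^m * T3 θ a = (W:ℝ) + T3 θ (a+m) := T3_split hθ a m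
      have hσp : ∀ t : ℕ, σ (2+2*t) = max (4*((3:ℝ)^m * T3 θ a) - (4*(t:ℝ)+2)) 0 := by
        intro t
        rw [hσ]; simp only
        rw [ih2 (2+2*t) (by omega)]
        have hv : vb n ℓ b (2+2*t) = -((4*t+2 : ℕ) : ℝ) := by
          rw [vb_eq hbB, if_neg (by omega),
            show 2*(2+2*t) - 2 - (2+2*t) % 2 = 4*t+2 from by omega]
        rw [hv]
        congr 1
        push_cast
        ring
      have hσq : ∀ t : ℕ, σ (3+2*t) = max (4*((3:ℝ)^m * T3 θ a) - (4*(t:ℝ)+3)) 0 := by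
        intro t
        rw [hσ]; simp only
        rw [ih2 (3+2*t) (by omega)]
        have hv : vb n ℓ b (3+2*t) = -((4*t+3 : ℕ) : ℝ) := by
          rw [vb_eq hbB, if_neg (by omega),
            show 2*(3+2*t) - 2 - (3+2*t) % 2 = 4*t+3 from by omega]
        rw [hv]
        congr 1
        push_cast
        ring
      have hbump : ∀ t : ℕ, σ (2+2*t) - σ (3+2*t) = if t+1 ≤ W then 1 else 0 := by
        intro t
        rw [hσp t, hσq t]
        exact bump t hy (T3_nonneg (a+m)) (T3_le_half hθ (a+m))
      have hWM : W ≤ M := by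
        have := pref_lt hθ a m
        omega
      have hcount : ∑ t ∈ Finset.range M, (if t+1 ≤ W then (1:ℝ) else 0) = (W:ℝ) := by
        have h := telescope (fun t => (t:ℝ)) hWM
        simp only [Nat.cast_zero, sub_zero] at h
        rw [← h]
        refine Finset.sum_congr rfl fun t _ => ?_
        split_ifs
        · push_cast; ring
        · rfl
      -- row R sum
      have hrowR : ∑ k ∈ Finset.range (2+2*M), rowR m k * σ k = T3 θ (a+m) := by
        rw [sum_pair]
        have e0 : rowR m 0 = 0 := by simp [rowR]
        have e1 : rowR m 1 = (3:ℝ)^m := by simp [rowR]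
        have epair : ∀ t ∈ Finset.range M,
            rowR m (2+2*t) * σ (2+2*t) + rowR m (3+2*t) * σ (3+2*t)
              = -(if t+1 ≤ W then (1:ℝ) else 0) := by
          intro t _
          have h2 : rowR m (2+2*t) = -1 := by
            rw [rowR]; rw [if_neg (by omega), if_neg (by omega), if_pos (by omega)]
          have h3 : rowR m (3+2*t) = 1 := by
            rw [rowR]; rw [if_neg (by omega), if_neg (by omega), if_neg (by omega)]
          have hb := hbump t
          rw [h2, h3]
          linarith
        rw [Finset.sum_congr rfl epair, e0, e1, hσ1, zero_mul, Finset.sum_neg_distrib, hcount]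
        linarith [hy]
      -- row S sum
      have hrowS : ∑ k ∈ Finset.range (2+2*M), rowS a m k * σ k = Sb θ (a+m) := by
        rw [sum_pair]
        have e0 : rowS a m 0 = 1 := by simp [rowS]
        have e1 : rowS a m 1 = 0 := by simp [rowS]
        have epair : ∀ t ∈ Finset.range M,
            rowS a m (2+2*t) * σ (2+2*t) + rowS a m (3+2*t) * σ (3+2*t)
              = ((2:ℝ)^a)⁻¹ * (if t+1 ≤ W then bin m (t+1) - bin m t else 0) := by
          intro t _
          have h2 : rowS a m (2+2*t) = ((2:ℝ)^a)⁻¹ * (bin m (t+1) - bin m t) := by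
            rw [rowS]; rw [if_neg (by omega), if_neg (by omega), if_pos (by omega),
              show (2+2*t-2)/2 = t from by omega, one_mul]
          have h3 : rowS a m (3+2*t) = -(((2:ℝ)^a)⁻¹ * (bin m (t+1) - bin m t)) := by
            rw [rowS]; rw [if_neg (by omega), if_neg (by omega), if_neg (by omega),
              show (3+2*t-2)/2 = t from by omega]
            ring
          have hb := hbump t
          have hc : rowS a m (2+2*t) * σ (2+2*t) + rowS a m (3+2*t) * σ (3+2*t)
              = ((2:ℝ)^a)⁻¹ * (bin m (t+1) - bin m t) * (σ (2+2*t) - σ (3+2*t)) := by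
            rw [h2, h3]; ring
          rw [hc, hb]
          split_ifs
          · ring
          · ring
        rw [Finset.sum_congr rfl epair, e0, e1, hσ0, one_mul, zero_mul, add_zero,
          ← Finset.mul_sum]
        have htel : ∑ t ∈ Finset.range M, (if t+1 ≤ W then bin m (t+1) - bin m t else 0)
            = bin m W := by
          rw [telescope (bin m) hWM, bin_zero, sub_zero]
        rw [htel, hW, bin_pref hθ a m]
        rw [show Sb θ (a+m) = Sb θ a + ∑ j ∈ Finset.range m, (θ (a+j):ℝ)/2^(a+j+1) from by
          rw [Sb, Sb, Finset.sum_range_add]]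
        congr 1
        rw [Finset.mul_sum]
        refine Finset.sum_congr rfl fun j _ => ?_
        rw [show a+j+1 = a+(j+1) from by omega, pow_add]
        ring
      -- assemble
      have off1 : off n ℓ (b+1) = a + m := off_succ b
      refine ⟨?_, ?_, ?_⟩
      · rw [hfwd 0, off1, ← hrowS]
        refine Finset.sum_congr rfl fun k _ => ?_
        rw [Wm_succ, if_pos rfl]
      · rw [hfwd 1, off1, ← hrowR]
        refine Finset.sum_congr rfl fun k _ => ?_
        rw [Wm_succ, if_neg one_ne_zero, if_pos rfl]
      · intro j hj
        rw [hfwd j, off1]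
        have hW2 : ∀ k ∈ Finset.range (2+2*M), Wm n ℓ (b+1) j k * σ k
            = 4*3^(blk n ℓ (b+1)) * (rowR m k * σ k) := by
          intro k _
          rw [Wm_succ, if_neg (by omega), if_neg (by omega)]
          ring
        rw [Finset.sum_congr rfl hW2, ← Finset.mul_sum, hrowR]


lemma abs_rowS_le (a m k : ℕ) : |rowS a m k| ≤ 1 := by
  rw [rowS]
  split_ifs with h1 h2 h3
  · simp
  · simp
  · -- k even
    rw [one_mul, abs_mul, abs_of_nonneg (by positivity : (0:ℝ) ≤ ((2:ℝ)^a)⁻¹)]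
    have hb : |bin m ((k-2)/2 + 1) - bin m ((k-2)/2)| ≤ 1 := by
      rw [abs_sub_le_iff]
      constructor <;>
        linarith [bin_nonneg m ((k-2)/2 + 1), bin_le_one m ((k-2)/2 + 1),
          bin_nonneg m ((k-2)/2), bin_le_one m ((k-2)/2)]
    have h2a : ((2:ℝ)^a)⁻¹ ≤ 1 := by
      rw [inv_le_one_iff₀]; right; exact one_le_pow₀ (by norm_num)
    calc ((2:ℝ)^a)⁻¹ * |bin m ((k-2)/2 + 1) - bin m ((k-2)/2)| ≤ 1 * 1 := by
          gcongr
      _ = 1 := by norm_num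
  · rw [neg_one_mul, abs_neg, abs_mul, abs_of_nonneg (by positivity : (0:ℝ) ≤ ((2:ℝ)^a)⁻¹)]
    have hb : |bin m ((k-2)/2 + 1) - bin m ((k-2)/2)| ≤ 1 := by
      rw [abs_sub_le_iff]
      constructor <;>
        linarith [bin_nonneg m ((k-2)/2 + 1), bin_le_one m ((k-2)/2 + 1),
          bin_nonneg m ((k-2)/2), bin_le_one m ((k-2)/2)]
    have h2a : ((2:ℝ)^a)⁻¹ ≤ 1 := by
      rw [inv_le_one_iff₀]; right; exact one_le_pow₀ (by norm_num)
    calc ((2:ℝ)^a)⁻¹ * |bin m ((k-2)/2 + 1) - bin m ((k-2)/2)| ≤ 1 * 1 := by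
          gcongr
      _ = 1 := by norm_num

lemma abs_rowR_le (m k : ℕ) : |rowR m k| ≤ (3:ℝ)^m := by
  have h1 : (1:ℝ) ≤ 3^m := one_le_pow₀ (by norm_num)
  rw [rowR]
  split_ifs
  · rw [abs_zero]; positivity
  · rw [abs_of_nonneg (by positivity)]
  · rw [abs_neg, abs_one]; exact h1
  · rw [abs_one]; exact h1

lemma pow_ineq {n : ℕ} (hn : 0 < n) :
    (4:ℕ)*3^n*3^n ≤ 3^(4*n) ∧ 2+4*3^n ≤ 3^(4*n) ∧ 4*3^n ≤ 3^(4*n) := by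
  have hp : 3 ≤ 3^n := by
    calc (3:ℕ) = 3^1 := (pow_one 3).symm
    _ ≤ 3^n := Nat.pow_le_pow_right (by norm_num) hn
  have h4 : (3:ℕ)^(4*n) = 3^n*3^n*3^n*3^n := by
    rw [show 4*n = n+n+n+n from by ring, pow_add, pow_add, pow_add]
  rw [h4]
  set p := (3:ℕ)^n with hpdef
  have hpp : 3*p ≤ p*p := Nat.mul_le_mul_right p hp
  have h9 : 9 ≤ p*p := le_trans (by omega) hpp
  have h3' : 9*(p*p) ≤ (p*p)*(p*p) := Nat.mul_le_mul_right (p*p) h9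
  refine ⟨?_, ?_, ?_⟩ <;> nlinarith [hp, hpp, h9, h3']

lemma wd_le (n ℓ : ℕ) (i : ℕ) : wd n ℓ i ≤ 2 + 2*3^n := by
  have h3 : (3:ℕ)^(blk n ℓ (i-1)) ≤ 3^n := Nat.pow_le_pow_right (by norm_num) (blk_le _)
  have h1 : 1 ≤ (3:ℕ)^n := Nat.one_le_pow _ _ (by norm_num)
  rw [wd]
  split_ifs <;> omega


end BitDecodingAux

/-- Bit decoding of ternary expansions with ReLU networks. -/
theorem bit_decoding :
    ∃ c : ℝ, 0 < c ∧
      ∀ n ℓ : ℕ, 0 < n → 0 < ℓ →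
        ∃ φ : (Fin 1 → ℝ) → Fin 2 → ℝ,
          IsReLUNet 1 2 (c * (3 : ℝ) ^ n) (c * (⌈(ℓ : ℝ) / (n : ℝ)⌉₊ : ℝ))
            ((3 : ℝ) ^ (c * (n : ℝ))) φ ∧
          ∀ θ : ℕ → ℕ, (∀ k, θ k ≤ 1) →
            φ (fun _ => ∑' k : ℕ, (θ k : ℝ) / 3 ^ (k + 1)) 0
                = (∑ j ∈ Finset.range ℓ, (θ j : ℝ) / 2 ^ (j + 1)) ∧
            φ (fun _ => ∑' k : ℕ, (θ k : ℝ) / 3 ^ (k + 1)) 1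
                = ∑' k : ℕ, (θ (ℓ + k) : ℝ) / 3 ^ (k + 1) := by
  refine ⟨4, by norm_num, fun n ℓ hn hl => ?_⟩
  have hbound : (3:ℝ) ^ ((4:ℝ) * (n:ℝ)) = ((3^(4*n) : ℕ) : ℝ) := by
    rw [show ((4:ℝ) * (n:ℝ)) = (((4*n : ℕ) : ℕ) : ℝ) from by push_cast; ring,
      Real.rpow_natCast]
    push_cast
    ring
  obtain ⟨hA, hB, hC⟩ := pow_ineq hn
  refine ⟨fun x j => forward (wd n ℓ) (Wm n ℓ) (vb n ℓ) (Bn n ℓ)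
      (fun k => if h : k < 1 then x ⟨k, h⟩ else 0) (j:ℕ) + vb n ℓ (Bn n ℓ) (j:ℕ),
    ⟨Bn n ℓ, wd n ℓ, Wm n ℓ, vb n ℓ, ?_, ?_, ?_, ?_, ?_, ?_, fun x j => rfl⟩, ?_⟩
  · -- depth
    have h0 : (0:ℝ) ≤ (Bn n ℓ : ℝ) := Nat.cast_nonneg _
    rw [Bn]
    linarith
  · simp [wd]
  · rw [wd, if_neg (by omega), if_neg (by omega)]
  · -- widths
    intro i _
    have h := wd_le n ℓ i
    have : (wd n ℓ i : ℝ) ≤ ((2 + 2*3^n : ℕ) : ℝ) := by exact_mod_cast h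
    refine this.trans ?_
    push_cast
    have h1 : (1:ℝ) ≤ 3^n := one_le_pow₀ (by norm_num)
    linarith
  · -- weights
    intro i j k _ _ _
    rw [hbound, Wm]
    have h3i : (3:ℝ)^(blk n ℓ i) ≤ 3^n :=
      pow_le_pow_right₀ (by norm_num) (blk_le i)
    have h3i' : (3:ℝ)^(blk n ℓ (i-1)) ≤ 3^n :=
      pow_le_pow_right₀ (by norm_num) (blk_le (i-1))
    have h3i0 : (3:ℝ)^(blk n ℓ 0) ≤ 3^n :=
      pow_le_pow_right₀ (by norm_num) (blk_le 0)
    have hcast : ((3^(4*n) : ℕ) : ℝ) = (3:ℝ)^(4*n) := by push_cast; ring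
    rw [hcast]
    have hAr : (4:ℝ)*3^n*3^n ≤ 3^(4*n) := by exact_mod_cast hA
    have hCr : (4:ℝ)*3^n ≤ 3^(4*n) := by exact_mod_cast hC
    have h1n : (1:ℝ) ≤ 3^n := one_le_pow₀ (by norm_num)
    split_ifs
    · simpa using by linarith
    · rw [abs_one]; linarith
    · rw [abs_of_nonneg (by positivity)]
      calc (4:ℝ)*3^(blk n ℓ 0) ≤ 4*3^n := by linarith
        _ ≤ 3^(4*n) := hCr
    · exact (abs_rowS_le _ _ _).trans (by linarith)
    · refine (abs_rowR_le _ _).trans (h3i'.trans ?_)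
      nlinarith
    · rw [abs_mul, abs_of_nonneg (by positivity : (0:ℝ) ≤ 4*3^(blk n ℓ i))]
      calc 4*3^(blk n ℓ i) * |rowR (blk n ℓ (i-1)) k|
          ≤ (4*3^n) * 3^n := by
            have := abs_rowR_le (blk n ℓ (i-1)) k
            have h0 : (0:ℝ) ≤ |rowR (blk n ℓ (i-1)) k| := abs_nonneg _
            nlinarith
        _ ≤ 3^(4*n) := by linarith [hAr]
  · -- biases
    intro i j _ hj
    rw [hbound, vb]
    have hcast : ((3^(4*n) : ℕ) : ℝ) = (3:ℝ)^(4*n) := by push_cast; ring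
    rw [hcast]
    have h1n : (1:ℝ) ≤ 3^n := one_le_pow₀ (by norm_num)
    split_ifs
    · simpa using by positivity
    · simpa using by positivity
    · rw [abs_neg, abs_of_nonneg (Nat.cast_nonneg _)]
      have hjw : j < 2 + 2*3^n := lt_of_lt_of_le hj (wd_le n ℓ (i+1))
      have hnat : 2*j - 2 - j % 2 ≤ 2 + 4*3^n := by omega
      have := hB
      calc ((2*j - 2 - j % 2 : ℕ) : ℝ) ≤ ((2 + 4*3^n : ℕ) : ℝ) := by exact_mod_cast hnat
        _ ≤ ((3^(4*n) : ℕ) : ℝ) := by exact_mod_cast hB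
        _ = (3:ℝ)^(4*n) := by push_cast; ring
  · -- correctness
    intro θ hθ
    set emb : ℕ → ℝ := fun k =>
      if h : k < 1 then (fun _ : Fin 1 => ∑' k : ℕ, (θ k : ℝ) / 3 ^ (k + 1)) ⟨k, h⟩ else 0
      with hemb
    have hx : emb 0 = T3 θ 0 := by
      rw [hemb]
      simp only [dif_pos (by norm_num : (0:ℕ) < 1)]
      rw [T3]
      exact tsum_congr fun k => by rw [zero_add]
    obtain ⟨h0, h1, -⟩ := invariant n ℓ hn hl hθ emb hx (Bn n ℓ) le_rfl
    have hvB : ∀ j, vb n ℓ (Bn n ℓ) j = 0 := fun j => by rw [vb, if_pos le_rfl]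
    constructor
    · show forward (wd n ℓ) (Wm n ℓ) (vb n ℓ) (Bn n ℓ) emb ((0 : Fin 2) : ℕ)
          + vb n ℓ (Bn n ℓ) ((0 : Fin 2) : ℕ) = _
      rw [show ((0 : Fin 2) : ℕ) = 0 from rfl, h0, hvB, add_zero, off_Bn hn, Sb]
    · show forward (wd n ℓ) (Wm n ℓ) (vb n ℓ) (Bn n ℓ) emb ((1 : Fin 2) : ℕ)
          + vb n ℓ (Bn n ℓ) ((1 : Fin 2) : ℕ) = _
      rw [show ((1 : Fin 2) : ℕ) = 1 from rfl, h1, hvB, add_zero, off_Bn hn, T3]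



end DeepRelu
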